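/- Let I be a minimal normalized scheduling instance with ρ_I > 1. For every processor p with s(p) > 1/(ρ_I − 1) one has w'_I(p) > s(p); moreover, for every processor p with s(p) ≥ 1/(ρ_I − 1) one has w'_I(p) ≥ s(p). -/
import Mathlib


open Finset

/-- A scheduling instance on uniform processors: `m` processors with positive
speeds `s 1, …, s m`, and `n` tasks with positive sizes `t 1 ≥ … ≥ t n`
(tasks are given in non-increasing order of size, as assumed for LPT). -/
structure SchedInstance where
  m : ℕ
  n : ℕ
  s : ℕ → ℝ
  t : ℕ → ℝ
  hm : 1 ≤ m
  hn : 1 ≤ n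
  hs : ∀ p, 1 ≤ p → p ≤ m → 0 < s p
  ht : ∀ i, 1 ≤ i → i ≤ n → 0 < t i
  tsorted : ∀ i j, 1 ≤ i → i ≤ j → j ≤ n → t j ≤ t i

namespace SchedInstance

variable (I : SchedInstance)

/-- The set of processor indices `{1, …, m}`. -/
def procs : Finset ℕ := Finset.Icc 1 I.m

/-- The set of task indices `{1, …, n}`. -/
def tasks : Finset ℕ := Finset.Icc 1 I.n

lemma procs_nonempty : I.procs.Nonempty := Finset.nonempty_Icc.mpr I.hm

/-- A schedule assigns every task `i ∈ {1,…,n}` a processor `A i ∈ {1,…,m}`. -/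
def IsSchedule (A : ℕ → ℕ) : Prop := ∀ i ∈ I.tasks, A i ∈ I.procs

/-- Total size of the tasks assigned by `A` to processor `p`. -/
noncomputable def load (A : ℕ → ℕ) (p : ℕ) : ℝ :=
  ∑ i ∈ I.tasks.filter (fun i => A i = p), I.t i

/-- The makespan of a schedule `A` : the largest completion time
`(Σ_{A i = p} t i) / s p` over the processors `p`. -/
noncomputable def makespan (A : ℕ → ℕ) : ℝ :=
  I.procs.sup' I.procs_nonempty (fun p => I.load A p / I.s p)

/-- `OPT(I)`: the optimal (minimum) makespan over all schedules. -/
noncomputable def opt : ℝ := sInf {r | ∃ A, I.IsSchedule A ∧ I.makespan A = r}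

/-- The completion time of processor `p` if task `i` is added to it while the
current workloads are `w`. -/
noncomputable def cost (w : ℕ → ℝ) (i p : ℕ) : ℝ := (w p + I.t i) / I.s p

/-- The processor the LPT rule chooses for task `i` given current workloads `w` :
the smallest-index processor minimizing `(w p + t i) / s p`. -/
noncomputable def choose (w : ℕ → ℝ) (i : ℕ) : ℕ :=
  (I.procs.filter
    (fun p => I.cost w i p = I.procs.inf' I.procs_nonempty (I.cost w i))).min'
    (by
      obtain ⟨p, hp, hpe⟩ := Finset.exists_mem_eq_inf' I.procs_nonempty (I.cost w i)
      exact ⟨p, Finset.mem_filter.mpr ⟨hp, hpe.symm⟩⟩)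

/-- `lptW k p` : the workload of processor `p` after the LPT algorithm has
assigned tasks `1, …, k` (in this order). -/
noncomputable def lptW : ℕ → ℕ → ℝ
  | 0, _ => 0
  | (k + 1), p =>
      lptW k p + if I.choose (lptW k) (k + 1) = p ∧ k + 1 ≤ I.n then I.t (k + 1) else 0

/-- `A_I` : the LPT assignment; task `i` goes to the least-index processor
minimizing the resulting completion time, given the previous assignments. -/
noncomputable def lptA (i : ℕ) : ℕ := I.choose (I.lptW (i - 1)) i

/-- `LPT(I)` : the makespan of the LPT schedule. -/
noncomputable def lptTime : ℝ := I.makespan I.lptA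

/-- `ρ_I = LPT(I) / OPT(I)` : the approximation ratio of LPT on instance `I`. -/
noncomputable def ratio : ℝ := I.lptTime / I.opt

/-- `I` is normalized: `OPT(I) = 1`, speeds are non-increasing, and the
smallest task has size `t n = 1`. -/
def Normalized : Prop :=
  I.opt = 1 ∧ (∀ p q, 1 ≤ p → p ≤ q → q ≤ I.m → I.s q ≤ I.s p) ∧ I.t I.n = 1

/-- `I` is minimal: every strictly smaller instance has a strictly smaller
LPT approximation ratio. -/
def Minimal : Prop :=
  ∀ J : SchedInstance, J.m ≤ I.m → J.n ≤ I.n →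
    ¬(J.m = I.m ∧ J.n = I.n) → J.ratio < I.ratio

/-- `T_I(p)` : the tasks assigned to processor `p` by the LPT schedule. -/
noncomputable def T (p : ℕ) : Finset ℕ := I.tasks.filter (fun i => I.lptA i = p)

/-- `T'_I(p) = T_I(p) \ {n}` : the LPT tasks of `p`, without the last task. -/
noncomputable def T' (p : ℕ) : Finset ℕ := (I.T p).erase I.n

/-- `w'_I(p)` : the workload of `p` in the LPT schedule without the last task. -/
noncomputable def w' (p : ℕ) : ℝ := ∑ i ∈ I.T' p, I.t i

/-- `T*(p)` for a schedule `A` : the tasks assigned to processor `p` by `A`. -/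
noncomputable def Tstar (A : ℕ → ℕ) (p : ℕ) : Finset ℕ :=
  I.tasks.filter (fun i => A i = p)

/-- `w*(p)` for a schedule `A` : the workload of processor `p` under `A`. -/
noncomputable def wstar (A : ℕ → ℕ) (p : ℕ) : ℝ := ∑ i ∈ I.Tstar A p, I.t i

/-- `A` is an optimal schedule whose workloads satisfy `w*(1) ≥ … ≥ w*(m)`. -/
def IsSortedOptimal (A : ℕ → ℕ) : Prop :=
  I.IsSchedule A ∧ I.makespan A = I.opt ∧
    ∀ p q, 1 ≤ p → p ≤ q → q ≤ I.m → I.wstar A q ≤ I.wstar A p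

/-- Processor `p` dominates processor `q` (with respect to the optimal
schedule `A`): `s p ≤ s q` and there is `f : T*(q) → T'(p)` with
`t i ≥ Σ_{f j = i} t j` for every `i ∈ T'(p)`. -/
def Dominates (A : ℕ → ℕ) (p q : ℕ) : Prop :=
  I.s p ≤ I.s q ∧ ∃ f : ℕ → ℕ,
    (∀ j ∈ I.Tstar A q, f j ∈ I.T' p) ∧
    ∀ i ∈ I.T' p, (∑ j ∈ (I.Tstar A q).filter (fun j => f j = i), I.t j) ≤ I.t i

end SchedInstance

/-- The polynomial `P_m(x) = 2x^m − x^{m−1} − ⋯ − x − 2`. -/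
noncomputable def Pm (m : ℕ) (x : ℝ) : ℝ := 2 * x ^ m - (∑ k ∈ Finset.Ico 1 m, x ^ k) - 2
namespace SchedInstance

variable (I : SchedInstance)

lemma mem_procs {p : ℕ} : p ∈ I.procs ↔ 1 ≤ p ∧ p ≤ I.m := by
  unfold procs; exact Finset.mem_Icc

lemma mem_tasks {i : ℕ} : i ∈ I.tasks ↔ 1 ≤ i ∧ i ≤ I.n := by
  unfold tasks; exact Finset.mem_Icc

lemma choose_mem (w : ℕ → ℝ) (i : ℕ) : I.choose w i ∈ I.procs := by
  have h : I.choose w i ∈ I.procs.filter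
      (fun p => I.cost w i p = I.procs.inf' I.procs_nonempty (I.cost w i)) := by
    unfold choose; exact Finset.min'_mem _ _
  exact (Finset.mem_filter.mp h).1

lemma choose_le (w : ℕ → ℝ) (i : ℕ) {p : ℕ} (hp : p ∈ I.procs) :
    I.cost w i (I.choose w i) ≤ I.cost w i p := by
  have h : I.choose w i ∈ I.procs.filter
      (fun p => I.cost w i p = I.procs.inf' I.procs_nonempty (I.cost w i)) := by
    unfold choose; exact Finset.min'_mem _ _
  exact le_of_eq_of_le (Finset.mem_filter.mp h).2 (Finset.inf'_le _ hp)

lemma lptW_zero (p : ℕ) : I.lptW 0 p = 0 := rfl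

lemma lptW_succ (k p : ℕ) : I.lptW (k + 1) p = I.lptW k p +
    (if I.choose (I.lptW k) (k + 1) = p ∧ k + 1 ≤ I.n then I.t (k + 1) else 0) := rfl

lemma lptW_eq_sum (k p : ℕ) :
    I.lptW k p =
      ∑ i ∈ (Finset.Icc 1 (min k I.n)).filter (fun i => I.lptA i = p), I.t i := by
  induction k with
  | zero => simp [lptW_zero]
  | succ k ih =>
    rw [I.lptW_succ, ih]
    by_cases hk : k + 1 ≤ I.n
    · rw [min_eq_left hk, min_eq_left (by omega : k ≤ I.n)]
      rw [Finset.sum_filter, Finset.sum_filter, Finset.sum_Icc_succ_top (by omega : 1 ≤ k + 1)]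
      congr 1
      have hA : I.lptA (k + 1) = I.choose (I.lptW k) (k + 1) := by
        unfold lptA; norm_num
      rw [hA]
      simp [hk]
    · rw [min_eq_right (by omega : I.n ≤ k + 1), min_eq_right (by omega : I.n ≤ k)]
      simp [hk]

lemma load_lptA_eq (p : ℕ) : I.load I.lptA p = I.lptW I.n p := by
  rw [I.lptW_eq_sum, min_self]
  rfl

lemma T'_eq (p : ℕ) :
    I.T' p = (Finset.Icc 1 (I.n - 1)).filter (fun i => I.lptA i = p) := by
  have hn := I.hn
  ext x
  simp only [T', T, tasks, Finset.mem_erase, Finset.mem_filter, Finset.mem_Icc]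
  constructor
  · rintro ⟨hx, ⟨h1, h2⟩, h3⟩
    exact ⟨⟨h1, by omega⟩, h3⟩
  · rintro ⟨⟨h1, h2⟩, h3⟩
    exact ⟨by omega, ⟨h1, by omega⟩, h3⟩

lemma w'_eq_lptW (p : ℕ) : I.w' p = I.lptW (I.n - 1) p := by
  rw [I.lptW_eq_sum, min_eq_left (Nat.sub_le _ _)]
  unfold w'
  rw [I.T'_eq]

lemma load_nonneg (A : ℕ → ℕ) (p : ℕ) : 0 ≤ I.load A p := by
  apply Finset.sum_nonneg
  intro i hi
  obtain ⟨h1, h2⟩ := I.mem_tasks.mp (Finset.mem_filter.mp hi).1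
  exact le_of_lt (I.ht i h1 h2)

lemma makespan_nonneg (A : ℕ → ℕ) : 0 ≤ I.makespan A := by
  have h1 : (1 : ℕ) ∈ I.procs := I.mem_procs.mpr ⟨le_rfl, I.hm⟩
  unfold makespan
  refine le_trans ?_ (Finset.le_sup' (fun p => I.load A p / I.s p) h1)
  exact div_nonneg (I.load_nonneg A 1) (le_of_lt (I.hs 1 le_rfl I.hm))

lemma schedSet_nonempty : {r | ∃ A, I.IsSchedule A ∧ I.makespan A = r}.Nonempty :=
  ⟨I.makespan (fun _ => 1), fun _ => 1, fun _ _ => I.mem_procs.mpr ⟨le_rfl, I.hm⟩, rfl⟩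

lemma schedSet_bddBelow : BddBelow {r | ∃ A, I.IsSchedule A ∧ I.makespan A = r} :=
  ⟨0, fun r ⟨A, _, hA⟩ => hA ▸ I.makespan_nonneg A⟩

lemma opt_le_makespan {A : ℕ → ℕ} (h : I.IsSchedule A) : I.opt ≤ I.makespan A :=
  csInf_le I.schedSet_bddBelow ⟨A, h, rfl⟩

lemma le_opt {r : ℝ} (h : ∀ A, I.IsSchedule A → r ≤ I.makespan A) : r ≤ I.opt :=
  le_csInf I.schedSet_nonempty (fun b ⟨A, hA, hb⟩ => hb ▸ h A hA)

lemma exists_makespan_lt {b : ℝ} (h : I.opt < b) :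
    ∃ A, I.IsSchedule A ∧ I.makespan A < b := by
  obtain ⟨r, ⟨A, hA, hr⟩, hrb⟩ := exists_lt_of_csInf_lt I.schedSet_nonempty h
  exact ⟨A, hA, hr ▸ hrb⟩

end SchedInstance

/-- Let `I` be a minimal normalized instance with `ρ_I > 1`. If
`s p > 1/(ρ_I − 1)` then `w'_I(p) > s p`; and if `s p ≥ 1/(ρ_I − 1)` then
`w'_I(p) ≥ s p`. -/
theorem w'_gt_s_of_fast (I : SchedInstance)
    (hnorm : I.Normalized) (hmin : I.Minimal) (hρ : 1 < I.ratio)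
    (p : ℕ) (hp1 : 1 ≤ p) (hpm : p ≤ I.m) :
    (1 / (I.ratio - 1) < I.s p → I.s p < I.w' p) ∧
    (1 / (I.ratio - 1) ≤ I.s p → I.s p ≤ I.w' p) := by
  obtain ⟨hopt, hsorted, htn⟩ := hnorm
  have hsp : 0 < I.s p := I.hs p hp1 hpm
  have hpmem : p ∈ I.procs := I.mem_procs.mpr ⟨hp1, hpm⟩
  have hIratio : I.ratio = I.lptTime := by unfold SchedInstance.ratio; rw [hopt, div_one]
  have hkey : I.ratio * I.s p ≤ I.w' p + 1 := by
    by_cases hn2 : 2 ≤ I.n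
    · -- main case
      set J : SchedInstance :=
        { m := I.m, n := I.n - 1, s := I.s, t := I.t,
          hm := I.hm, hn := by omega,
          hs := I.hs,
          ht := fun i h1 h2 => I.ht i h1 (by omega),
          tsorted := fun i j h1 h2 h3 => I.tsorted i j h1 h2 (by omega) } with hJ
      have hJn : J.n = I.n - 1 := rfl
      have hJt : J.t = I.t := rfl
      have hJs : J.s = I.s := rfl
      have hJprocs : J.procs = I.procs := rfl
      have hJtasks : J.tasks = Finset.Icc 1 (I.n - 1) := rfl
      -- LPT of J agrees with that of I on the first n-1 steps
      have hWJ : ∀ k, k ≤ I.n - 1 → ∀ p', J.lptW k p' = I.lptW k p' := by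
        intro k
        induction k with
        | zero => intro _ p'; rfl
        | succ k ih =>
          intro hk p'
          have hfun : J.lptW k = I.lptW k := funext (ih (by omega))
          rw [J.lptW_succ, I.lptW_succ, hfun]
          have hch : J.choose (I.lptW k) (k + 1) = I.choose (I.lptW k) (k + 1) := rfl
          rw [hch, hJt]
          have c1 : k + 1 ≤ J.n := by omega
          have c2 : k + 1 ≤ I.n := by omega
          simp [c1, c2]
      have hJload : ∀ p' ∈ I.procs, J.load J.lptA p' = I.w' p' := by
        intro p' _
        rw [J.load_lptA_eq]
        have h1 : J.lptW J.n p' = I.lptW (I.n - 1) p' := hWJ (I.n - 1) le_rfl p'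
        rw [h1, ← I.w'_eq_lptW]
      -- minimality
      have hratJ : J.ratio < I.ratio := by
        apply hmin J le_rfl (Nat.sub_le _ _)
        rintro ⟨-, h2⟩
        have h2' : I.n - 1 = I.n := h2
        omega
      -- J.opt ≤ 1
      have hJopt_le : J.opt ≤ 1 := by
        by_contra hlt
        push_neg at hlt
        obtain ⟨A, hA, hAlt⟩ := I.exists_makespan_lt (show I.opt < J.opt by rw [hopt]; exact hlt)
        have hASJ : J.IsSchedule A := by
          intro i hi
          apply hA
          obtain ⟨h1, h2⟩ := J.mem_tasks.mp hi
          have h2' : i ≤ I.n - 1 := h2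
          exact I.mem_tasks.mpr ⟨h1, by omega⟩
        have hle : J.makespan A ≤ I.makespan A := by
          unfold SchedInstance.makespan
          apply Finset.sup'_le
          intro p' hp'
          have hp'' : p' ∈ I.procs := hp'
          obtain ⟨ha, hb⟩ := I.mem_procs.mp hp''
          have hs' : 0 < I.s p' := I.hs p' ha hb
          refine le_trans ?_ (Finset.le_sup' (fun r => I.load A r / I.s r) hp'')
          have hload : J.load A p' ≤ I.load A p' := by
            unfold SchedInstance.load
            apply Finset.sum_le_sum_of_subset_of_nonneg
            · apply Finset.filter_subset_filter
              intro i hi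
              obtain ⟨h1, h2⟩ := J.mem_tasks.mp hi
              have h2' : i ≤ I.n - 1 := h2
              exact I.mem_tasks.mpr ⟨h1, by omega⟩
            · intro i hi _
              obtain ⟨h1, h2⟩ := I.mem_tasks.mp (Finset.mem_filter.mp hi).1
              exact le_of_lt (I.ht i h1 h2)
          rw [hJs]
          gcongr
        exact absurd (lt_of_le_of_lt (le_trans (J.opt_le_makespan hASJ) hle) hAlt) (lt_irrefl _)
      -- J.opt > 0
      have hJopt_pos : 0 < J.opt := by
        have hr : (0:ℝ) < I.t 1 / I.s 1 := div_pos (I.ht 1 le_rfl I.hn) (I.hs 1 le_rfl I.hm)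
        refine lt_of_lt_of_le hr (J.le_opt ?_)
        intro A hA
        have h1t : (1 : ℕ) ∈ J.tasks := J.mem_tasks.mpr ⟨le_rfl, by rw [hJn]; omega⟩
        have hA1 : A 1 ∈ I.procs := hA 1 h1t
        obtain ⟨ha, hb⟩ := I.mem_procs.mp hA1
        have hsA : 0 < I.s (A 1) := I.hs _ ha hb
        have hload : I.t 1 ≤ J.load A (A 1) := by
          unfold SchedInstance.load
          refine Finset.single_le_sum (f := fun i => J.t i) ?_ (Finset.mem_filter.mpr ⟨h1t, rfl⟩)
          intro i hi
          obtain ⟨h1, h2⟩ := J.mem_tasks.mp (Finset.mem_filter.mp hi).1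
          have h2' : i ≤ I.n - 1 := h2
          have : (0:ℝ) < J.t i := I.ht i h1 (by omega)
          exact le_of_lt this
        have hms : J.load A (A 1) / J.s (A 1) ≤ J.makespan A := by
          unfold SchedInstance.makespan
          exact Finset.le_sup' (fun r => J.load A r / J.s r) (show A 1 ∈ J.procs from hA1)
        refine le_trans ?_ hms
        rw [hJs]
        have hss : I.s (A 1) ≤ I.s 1 := hsorted 1 (A 1) le_rfl ha hb
        have ht1 : (0:ℝ) ≤ I.t 1 := le_of_lt (I.ht 1 le_rfl I.hn)
        calc I.t 1 / I.s 1 ≤ I.t 1 / I.s (A 1) := by gcongr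
          _ ≤ J.load A (A 1) / I.s (A 1) := by gcongr
      have hJratio : J.lptTime ≤ J.ratio := by
        unfold SchedInstance.ratio
        rw [le_div_iff₀ hJopt_pos]
        have h0 : (0:ℝ) ≤ J.lptTime := J.makespan_nonneg J.lptA
        exact mul_le_of_le_one_right h0 hJopt_le
      have hJlt : J.lptTime < I.lptTime := lt_of_le_of_lt hJratio (hIratio ▸ hratJ)
      have hw'lt : ∀ p' ∈ I.procs, I.w' p' / I.s p' < I.lptTime := by
        intro p' hp'
        refine lt_of_le_of_lt ?_ hJlt
        calc I.w' p' / I.s p' = J.load J.lptA p' / J.s p' := by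
              rw [hJload p' hp', hJs]
          _ ≤ J.lptTime := by
              unfold SchedInstance.lptTime SchedInstance.makespan
              exact Finset.le_sup' (fun r => J.load J.lptA r / J.s r) (show p' ∈ J.procs from hp')
      have hn1 : I.n = (I.n - 1) + 1 := by omega
      set q := I.lptA I.n with hq
      have hqc : q = I.choose (I.lptW (I.n - 1)) I.n := rfl
      have hqmem : q ∈ I.procs := by rw [hqc]; exact I.choose_mem _ _
      have hcond : I.choose (I.lptW (I.n - 1)) (I.n - 1 + 1) = q ∧ I.n - 1 + 1 ≤ I.n :=
        ⟨by rw [← hn1]; exact hqc.symm, by omega⟩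
      have hloadq : I.load I.lptA q = I.w' q + I.t I.n := by
        rw [I.load_lptA_eq, I.w'_eq_lptW]
        conv_lhs => rw [hn1]
        rw [I.lptW_succ, if_pos hcond, ← hn1]
      have hloadp : ∀ p', p' ≠ q → I.load I.lptA p' = I.w' p' := by
        intro p' hne
        rw [I.load_lptA_eq, I.w'_eq_lptW]
        conv_lhs => rw [hn1]
        rw [I.lptW_succ, if_neg, add_zero]
        rintro ⟨h1, -⟩
        exact hne (h1.symm.trans hcond.1)
      have hTq : I.lptTime = (I.w' q + I.t I.n) / I.s q := by
        obtain ⟨p0, hp0, hsup⟩ := Finset.exists_mem_eq_sup' I.procs_nonempty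
          (fun r => I.load I.lptA r / I.s r)
        have hT : I.lptTime = I.load I.lptA p0 / I.s p0 := hsup
        by_cases hp0q : p0 = q
        · rw [hT, hp0q, hloadq]
        · exfalso
          have hlt := hw'lt p0 hp0
          rw [← hloadp p0 hp0q] at hlt
          rw [hT] at hlt
          exact lt_irrefl _ hlt
      have hcost : (I.w' q + I.t I.n) / I.s q ≤ (I.w' p + I.t I.n) / I.s p := by
        have hc := I.choose_le (I.lptW (I.n - 1)) I.n hpmem
        rw [← hqc] at hc
        unfold SchedInstance.cost at hc
        rw [I.w'_eq_lptW, I.w'_eq_lptW]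
        exact hc
      rw [htn] at hcost
      rw [hIratio, hTq, htn, ← le_div_iff₀ hsp]
      exact hcost
    · -- the case n = 1 is contradictory
      exfalso
      have hnn := I.hn
      have hn1 : I.n = 1 := by omega
      set q := I.lptA 1 with hq
      have hqc : q = I.choose (I.lptW 0) 1 := rfl
      have hqmem : q ∈ I.procs := by rw [hqc]; exact I.choose_mem _ _
      obtain ⟨hq1, hqm⟩ := I.mem_procs.mp hqmem
      have hsq : 0 < I.s q := I.hs q hq1 hqm
      have htq : I.t 1 / I.s q ≤ 1 := by
        rw [← hopt]
        apply I.le_opt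
        intro A hA
        have h1t : (1 : ℕ) ∈ I.tasks := I.mem_tasks.mpr ⟨le_rfl, I.hn⟩
        have hA1 : A 1 ∈ I.procs := hA 1 h1t
        obtain ⟨ha, hb⟩ := I.mem_procs.mp hA1
        have hsA : 0 < I.s (A 1) := I.hs _ ha hb
        have hch := I.choose_le (I.lptW 0) 1 hA1
        rw [← hqc] at hch
        unfold SchedInstance.cost at hch
        rw [I.lptW_zero, I.lptW_zero, zero_add] at hch
        have hload : I.t 1 ≤ I.load A (A 1) := by
          unfold SchedInstance.load
          refine Finset.single_le_sum (f := fun i => I.t i) ?_ (Finset.mem_filter.mpr ⟨h1t, rfl⟩)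
          intro i hi
          obtain ⟨h1, h2⟩ := I.mem_tasks.mp (Finset.mem_filter.mp hi).1
          exact le_of_lt (I.ht i h1 h2)
        have hms : I.load A (A 1) / I.s (A 1) ≤ I.makespan A := by
          unfold SchedInstance.makespan
          exact Finset.le_sup' (fun r => I.load A r / I.s r) hA1
        refine le_trans (le_trans hch ?_) hms
        gcongr
      have hle : I.lptTime ≤ 1 := by
        unfold SchedInstance.lptTime SchedInstance.makespan
        apply Finset.sup'_le
        intro p' hp'
        obtain ⟨h1, h2⟩ := I.mem_procs.mp hp'
        have hsp' : 0 < I.s p' := I.hs p' h1 h2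
        have hload1 : I.load I.lptA p' = I.lptW 1 p' := by
          rw [I.load_lptA_eq, hn1]
        rw [hload1, I.lptW_succ, I.lptW_zero, zero_add]
        norm_num
        by_cases hpq : p' = q
        · rw [if_pos ⟨by rw [hpq, hq]; rfl, I.hn⟩, hpq]
          exact htq
        · rw [if_neg, zero_div]
          · norm_num
          · rintro ⟨hc, -⟩
            exact hpq (hc.symm.trans hqc.symm)
      rw [hIratio] at hρ
      linarith
  constructor
  · intro h
    have hρ1 : (0:ℝ) < I.ratio - 1 := by linarith
    rw [div_lt_iff₀ hρ1] at h
    nlinarith [hkey]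
  · intro h
    have hρ1 : (0:ℝ) < I.ratio - 1 := by linarith
    rw [div_le_iff₀ hρ1] at h
    nlinarith [hkey]
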